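/- The Arf invariant of a quadratic refinement is well-defined: if H is a free ℤ/2-vector space of dimension 2k with a nondegenerate symplectic form Λ and q : H → ℤ/2 satisfies q(x+y) = q(x) + q(y) + Λ(x,y), then for any two symplectic bases (λ_i, μ_i) and (λ'_i, μ'_i) of H one has Σ_{i=1}^k q(λ_i)q(μ_i) = Σ_{i=1}^k q(λ'_i)q(μ'_i). -/

import Mathlib

open Finset

private def chi (a : ZMod 2) : ℤ := if a = 0 then 1 else -1

private lemma chi_zero : chi 0 = 1 := rfl

private lemma chi_add : ∀ a b : ZMod 2, chi (a + b) = chi a * chi b := by decide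

private lemma chi_inj : Function.Injective chi := by decide

private lemma chi_sum {ι : Type*} (s : Finset ι) (g : ι → ZMod 2) :
    chi (∑ i ∈ s, g i) = ∏ i ∈ s, chi (g i) := by
  classical
  induction s using Finset.induction with
  | empty => simp [chi_zero]
  | @insert a s hx ih => rw [Finset.sum_insert hx, Finset.prod_insert hx, chi_add, ih]

private lemma sum_zmod2 (f : ZMod 2 → ℤ) : ∑ a : ZMod 2, f a = f 0 + f 1 := by
  rw [show (Finset.univ : Finset (ZMod 2)) = {0, 1} from by decide]
  rw [Finset.sum_insert (by decide), Finset.sum_singleton]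

private lemma chi_key : ∀ α β : ZMod 2,
    chi 0 + chi β + (chi α + chi (α + β + 1)) = 2 * chi (α * β) := by decide

private lemma q_sum_orth {H : Type*} [AddCommGroup H] [Module (ZMod 2) H]
    (Λ : H →ₗ[ZMod 2] H →ₗ[ZMod 2] ZMod 2)
    (q : H → ZMod 2) (hq0 : q 0 = 0)
    (hquad : ∀ x y, q (x + y) = q x + q y + Λ x y)
    {ι : Type*} [DecidableEq ι] (v : ι → H)
    (horth : ∀ i j, i ≠ j → Λ (v i) (v j) = 0) (s : Finset ι) :
    q (∑ i ∈ s, v i) = ∑ i ∈ s, q (v i) := by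
  induction s using Finset.induction with
  | empty => simpa
  | @insert a s hx ih =>
    rw [Finset.sum_insert hx, hquad, ih, Finset.sum_insert hx]
    have hz : Λ (v a) (∑ i ∈ s, v i) = 0 := by
      rw [map_sum]
      exact Finset.sum_eq_zero fun j hj => horth a j (by rintro rfl; exact hx hj)
    rw [hz, add_zero]

private lemma arf_gauss {H : Type*} [AddCommGroup H] [Module (ZMod 2) H] [Fintype H]
    (k : ℕ)
    (Λ : H →ₗ[ZMod 2] H →ₗ[ZMod 2] ZMod 2)
    (hsymm : ∀ x y, Λ x y = Λ y x)
    (q : H → ZMod 2) (hq0 : q 0 = 0)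
    (hquad : ∀ x y, q (x + y) = q x + q y + Λ x y)
    (b : Module.Basis (Fin k ⊕ Fin k) (ZMod 2) H)
    (hll : ∀ i j, Λ (b (Sum.inl i)) (b (Sum.inl j)) = 0)
    (hmm : ∀ i j, Λ (b (Sum.inr i)) (b (Sum.inr j)) = 0)
    (hlm : ∀ i j, Λ (b (Sum.inl i)) (b (Sum.inr j)) = if i = j then 1 else 0) :
    ∑ x : H, chi (q x) =
      2 ^ k * chi (∑ i : Fin k, q (b (Sum.inl i)) * q (b (Sum.inr i))) := by
  classical
  set lam : Fin k → H := fun i => b (Sum.inl i) with hlam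
  set mu : Fin k → H := fun i => b (Sum.inr i) with hmu
  -- reindexing equivalence
  let e0 : (Fin k → ZMod 2 × ZMod 2) ≃ (Fin k ⊕ Fin k → ZMod 2) :=
    (Equiv.arrowProdEquivProdArrow _ _ _).trans (Equiv.sumArrowEquivProdArrow _ _ _).symm
  let e : (Fin k → ZMod 2 × ZMod 2) ≃ H := e0.trans b.equivFun.toEquiv.symm
  have he : ∀ g, e g = ∑ i : Fin k, ((g i).1 • lam i + (g i).2 • mu i) := by
    intro g
    have h1 : e g = b.equivFun.symm (e0 g) := rfl
    rw [h1, Module.Basis.equivFun_symm_apply, Fintype.sum_sum_type, ← Finset.sum_add_distrib]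
    rfl
  have hsum : ∑ x : H, chi (q x) = ∑ g : Fin k → ZMod 2 × ZMod 2, chi (q (e g)) :=
    (Equiv.sum_comp e fun x => chi (q x)).symm
  rw [hsum]
  have hqe : ∀ g : Fin k → ZMod 2 × ZMod 2,
      chi (q (e g)) = ∏ i : Fin k, chi (q ((g i).1 • lam i + (g i).2 • mu i)) := by
    intro g
    rw [he g]
    rw [q_sum_orth Λ q hq0 hquad _ ?_ Finset.univ, chi_sum]
    intro i j hij
    simp only [map_add, map_smul, LinearMap.add_apply, LinearMap.smul_apply]
    have h1 : Λ (lam i) (lam j) = 0 := hll i j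
    have h2 : Λ (lam i) (mu j) = 0 := by rw [hlm i j, if_neg hij]
    have h3 : Λ (mu i) (lam j) = 0 := by
      rw [hsymm, hlm j i, if_neg (Ne.symm hij)]
    have h4 : Λ (mu i) (mu j) = 0 := hmm i j
    rw [h1, h2, h3, h4]
    simp
  simp only [hqe]
  have hswap := Fintype.prod_sum
    (fun (i : Fin k) (t : ZMod 2 × ZMod 2) => chi (q (t.1 • lam i + t.2 • mu i)))
  rw [← hswap]
  have hfact : ∀ i : Fin k,
      ∑ t : ZMod 2 × ZMod 2, chi (q (t.1 • lam i + t.2 • mu i)) =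
        2 * chi (q (lam i) * q (mu i)) := by
    intro i
    rw [Fintype.sum_prod_type, sum_zmod2]
    simp only [sum_zmod2]
    have e00 : q ((0 : ZMod 2) • lam i + (0 : ZMod 2) • mu i) = 0 := by
      simpa using hq0
    have e01 : q ((0 : ZMod 2) • lam i + (1 : ZMod 2) • mu i) = q (mu i) := by simp
    have e10 : q ((1 : ZMod 2) • lam i + (0 : ZMod 2) • mu i) = q (lam i) := by simp
    have e11 : q ((1 : ZMod 2) • lam i + (1 : ZMod 2) • mu i) =
        q (lam i) + q (mu i) + 1 := by
      have := hlm i i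
      rw [if_pos rfl] at this
      simp [hquad, this, hlam, hmu]
    rw [e00, e01, e10, e11]
    exact chi_key _ _
  rw [Finset.prod_congr rfl fun i _ => hfact i, Finset.prod_mul_distrib,
    Finset.prod_const, ← chi_sum]
  simp [hlam, hmu]

theorem stmt6 {H : Type*} [AddCommGroup H] [Module (ZMod 2) H]
    (k : ℕ)
    (Λ : H →ₗ[ZMod 2] H →ₗ[ZMod 2] ZMod 2)
    (halt : ∀ x, Λ x x = 0)
    (hnondeg : Function.Bijective fun x : H => Λ x)
    (q : H → ZMod 2)
    (hquad : ∀ x y, q (x + y) = q x + q y + Λ x y)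
    (b b' : Module.Basis (Fin k ⊕ Fin k) (ZMod 2) H)
    (hll : ∀ i j, Λ (b (Sum.inl i)) (b (Sum.inl j)) = 0)
    (hmm : ∀ i j, Λ (b (Sum.inr i)) (b (Sum.inr j)) = 0)
    (hlm : ∀ i j, Λ (b (Sum.inl i)) (b (Sum.inr j)) = if i = j then 1 else 0)
    (hll' : ∀ i j, Λ (b' (Sum.inl i)) (b' (Sum.inl j)) = 0)
    (hmm' : ∀ i j, Λ (b' (Sum.inr i)) (b' (Sum.inr j)) = 0)
    (hlm' : ∀ i j, Λ (b' (Sum.inl i)) (b' (Sum.inr j)) = if i = j then 1 else 0) :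
    ∑ i : Fin k, q (b (Sum.inl i)) * q (b (Sum.inr i)) =
      ∑ i : Fin k, q (b' (Sum.inl i)) * q (b' (Sum.inr i)) := by
  classical
  haveI : Fintype H := Fintype.ofEquiv _ b.equivFun.toEquiv.symm
  have hq0 : q 0 = 0 := by
    have h := hquad 0 0
    simp only [add_zero, map_zero, LinearMap.zero_apply] at h
    have : ∀ a : ZMod 2, a = a + a → a = 0 := by decide
    exact this _ h
  have hsymm : ∀ x y, Λ x y = Λ y x := by
    intro x y
    have h := halt (x + y)
    simp only [map_add, LinearMap.add_apply, halt] at h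
    have h2 : ∀ a c : ZMod 2, a + c = 0 → a = c := by decide
    exact h2 _ _ (by linear_combination h)
  have g1 := arf_gauss k Λ hsymm q hq0 hquad b hll hmm hlm
  have g2 := arf_gauss k Λ hsymm q hq0 hquad b' hll' hmm' hlm'
  have := g1.symm.trans g2
  exact chi_inj (mul_left_cancel₀ (pow_ne_zero k (two_ne_zero)) this)
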